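/- Let p > 1, N ≥ 1, and let η, ξ ∈ ℝ^N satisfy |η−ξ| + |ξ| > 0. Then |Φ_p(η,ξ)|² ≤ C_p (|η−ξ| + |ξ|)^{p−2} (Φ_p(η,ξ)·η), where C_p = (max{p−1, 2^{2−p}})² / min{p−1, 2^{2−p}}. -/

import Mathlib

open Real

/-- `x^(p-2) * x = x^(p-1)` for `x ≥ 0`, `p > 1` (holds even at `x = 0`). -/
lemma rpow_pm2_mul {p x : ℝ} (hp : 1 < p) (hx : 0 ≤ x) :
    x ^ (p - 2) * x = x ^ (p - 1) := by
  rcases hx.eq_or_lt with rfl | hx'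
  · rw [mul_zero, Real.zero_rpow (by intro hc; rw [sub_eq_zero] at hc; linarith)]
  · rw [show p - 1 = (p - 2) + 1 by ring, Real.rpow_add_one hx'.ne' (p - 2)]

lemma two_rpow_cancel {p : ℝ} : (2:ℝ) ^ (2 - p) * (2:ℝ) ^ (p - 2) = 1 := by
  rw [← Real.rpow_add two_pos]
  norm_num

/-- Convex tangent-line inequality for rpow, `q ≥ 1`. -/
lemma tangent_convex {q A B : ℝ} (hq : 1 ≤ q) (hA : 0 < A) (hB : 0 ≤ B) :
    A ^ q + q * A ^ (q - 1) * (B - A) ≤ B ^ q := by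
  have hs : (-1 : ℝ) ≤ B / A - 1 := by
    have : 0 ≤ B / A := div_nonneg hB hA.le
    linarith
  have h := one_add_mul_self_le_rpow_one_add hs hq
  rw [show (1:ℝ) + (B / A - 1) = B / A by ring, Real.div_rpow hB hA.le] at h
  have hAq : 0 < A ^ q := Real.rpow_pos_of_pos hA q
  have h2 := mul_le_mul_of_nonneg_right h hAq.le
  rw [div_mul_cancel₀ _ (ne_of_gt hAq)] at h2
  have e2 : A ^ (q - 1) * A = A ^ q := by
    rw [← Real.rpow_add_one hA.ne' (q - 1)]; norm_num
  have e3 : A ^ q + q * A ^ (q - 1) * (B - A) = (1 + q * (B / A - 1)) * A ^ q := by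
    rw [← e2]; field_simp
  linarith [e3 ▸ h2]

/-- Concave tangent-line inequality for rpow, `0 ≤ q ≤ 1`. -/
lemma tangent_concave {q A B : ℝ} (hq0 : 0 ≤ q) (hq1 : q ≤ 1) (hA : 0 < A) (hB : 0 ≤ B) :
    B ^ q ≤ A ^ q + q * A ^ (q - 1) * (B - A) := by
  have hs : (-1 : ℝ) ≤ B / A - 1 := by
    have : 0 ≤ B / A := div_nonneg hB hA.le
    linarith
  have h := rpow_one_add_le_one_add_mul_self hs hq0 hq1
  rw [show (1:ℝ) + (B / A - 1) = B / A by ring, Real.div_rpow hB hA.le] at h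
  have hAq : 0 < A ^ q := Real.rpow_pos_of_pos hA q
  have h2 := mul_le_mul_of_nonneg_right h hAq.le
  rw [div_mul_cancel₀ _ (ne_of_gt hAq)] at h2
  have e2 : A ^ (q - 1) * A = A ^ q := by
    rw [← Real.rpow_add_one hA.ne' (q - 1)]; norm_num
  have e3 : A ^ q + q * A ^ (q - 1) * (B - A) = (1 + q * (B / A - 1)) * A ^ q := by
    rw [← e2]; field_simp
  linarith [e3 ▸ h2]

/-- Subadditivity of rpow for exponents in `[0,1]`, real version. -/
lemma real_rpow_subadd {A B q : ℝ} (hA : 0 ≤ A) (hB : 0 ≤ B) (h0 : 0 ≤ q) (h1 : q ≤ 1) :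
    (A + B) ^ q ≤ A ^ q + B ^ q := by
  have h := NNReal.rpow_add_le_add_rpow (Real.toNNReal A) (Real.toNNReal B) h0 h1
  rw [← Real.toNNReal_add hA hB] at h
  have h2 := NNReal.coe_le_coe.2 h
  rwa [NNReal.coe_add, NNReal.coe_rpow, NNReal.coe_rpow, NNReal.coe_rpow,
    Real.coe_toNNReal _ (by linarith : (0:ℝ) ≤ A + B), Real.coe_toNNReal _ hA,
    Real.coe_toNNReal _ hB] at h2

/-- Superadditivity of rpow for exponents `≥ 1`, real version. -/
lemma real_rpow_superadd {A B q : ℝ} (hA : 0 ≤ A) (hB : 0 ≤ B) (h1 : 1 ≤ q) :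
    A ^ q + B ^ q ≤ (A + B) ^ q := by
  have h := NNReal.add_rpow_le_rpow_add (Real.toNNReal A) (Real.toNNReal B) h1
  rw [← Real.toNNReal_add hA hB] at h
  have h2 := NNReal.coe_le_coe.2 h
  rwa [NNReal.coe_add, NNReal.coe_rpow, NNReal.coe_rpow, NNReal.coe_rpow,
    Real.coe_toNNReal _ (by linarith : (0:ℝ) ≤ A + B), Real.coe_toNNReal _ hA,
    Real.coe_toNNReal _ hB] at h2

/-- Lower bound `m (A+B)^(p-1) ≤ A^(p-1) + B^(p-1)`. -/
lemma S3 {p A B : ℝ} (hp : 1 < p) (hA : 0 ≤ A) (hB : 0 ≤ B) :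
    min (p-1) (2^(2-p)) * (A+B)^(p-1) ≤ A^(p-1) + B^(p-1) := by
  rcases le_or_gt 2 p with h2 | h2
  · by_cases hS : A + B = 0
    · have hA0 : A = 0 := by linarith [hA, hB, le_antisymm (by linarith) (by linarith : (0:ℝ) ≤ A + B)]
      have hB0 : B = 0 := by linarith
      rw [hS, hA0, hB0, Real.zero_rpow (by intro hc; rw [sub_eq_zero] at hc; linarith : p - 1 ≠ 0)]
      norm_num
    · have hS' : 0 < A + B := lt_of_le_of_ne (by linarith) (Ne.symm hS)
      have hhalf : 0 < (A+B)/2 := by linarith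
      have t1 := tangent_convex (q := p-1) (by linarith) hhalf hA
      have t2 := tangent_convex (q := p-1) (by linarith) hhalf hB
      rw [show p-1-1 = p-2 by ring] at t1 t2
      have e : ((A+B)/2)^(p-1) = (A+B)^(p-1) / 2^(p-1) := Real.div_rpow hS'.le (by norm_num : (0:ℝ) ≤ 2) (p-1)
      have e2 : (2:ℝ)^(2-p) = 2/2^(p-1) := by
        rw [show (2:ℝ)-p = 1 - (p-1) by ring, Real.rpow_sub two_pos, Real.rpow_one]
      have hpos : (0:ℝ) < 2^(p-1) := Real.rpow_pos_of_pos two_pos _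
      calc min (p-1) (2^(2-p)) * (A+B)^(p-1)
          ≤ 2^(2-p) * (A+B)^(p-1) :=
            mul_le_mul_of_nonneg_right (min_le_right _ _) (Real.rpow_nonneg hS'.le _)
        _ = 2*((A+B)/2)^(p-1) := by rw [e, e2]; ring
        _ ≤ A^(p-1) + B^(p-1) := by nlinarith [t1, t2]
  · have hsub := real_rpow_subadd hA hB (by linarith : (0:ℝ) ≤ p-1) (by linarith)
    have hle1 : min (p-1) (2^(2-p)) ≤ 1 := le_trans (min_le_left _ _) (by linarith)
    have h0 : 0 ≤ (A+B)^(p-1) := Real.rpow_nonneg (by linarith) _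
    nlinarith [mul_le_mul_of_nonneg_right hle1 h0]

/-- Upper bound `A^(p-1) + B^(p-1) ≤ M (A+B)^(p-1)`. -/
lemma S4 {p A B : ℝ} (hp : 1 < p) (hA : 0 ≤ A) (hB : 0 ≤ B) :
    A^(p-1) + B^(p-1) ≤ max (p-1) (2^(2-p)) * (A+B)^(p-1) := by
  rcases le_or_gt 2 p with h2 | h2
  · have hsup := real_rpow_superadd hA hB (by linarith : (1:ℝ) ≤ p-1)
    have h1 : (1:ℝ) ≤ max (p-1) (2^(2-p)) := le_trans (by linarith) (le_max_left _ _)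
    have h0 : 0 ≤ (A+B)^(p-1) := Real.rpow_nonneg (by linarith) _
    nlinarith [mul_le_mul_of_nonneg_right h1 h0]
  · by_cases hS : A + B = 0
    · have hA0 : A = 0 := le_antisymm (by linarith) hA
      have hB0 : B = 0 := by linarith
      rw [hS, hA0, hB0, Real.zero_rpow (by intro hc; rw [sub_eq_zero] at hc; linarith : p - 1 ≠ 0)]
      norm_num
    · have hS' : 0 < A + B := lt_of_le_of_ne (by linarith) (Ne.symm hS)
      have hhalf : 0 < (A+B)/2 := by linarith
      have t1 := tangent_concave (q := p-1) (by linarith) (by linarith) hhalf hA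
      have t2 := tangent_concave (q := p-1) (by linarith) (by linarith) hhalf hB
      rw [show p-1-1 = p-2 by ring] at t1 t2
      have e : ((A+B)/2)^(p-1) = (A+B)^(p-1) / 2^(p-1) := Real.div_rpow hS'.le (by norm_num : (0:ℝ) ≤ 2) (p-1)
      have e2 : (2:ℝ)^(2-p) = 2/2^(p-1) := by
        rw [show (2:ℝ)-p = 1 - (p-1) by ring, Real.rpow_sub two_pos, Real.rpow_one]
      have hpos : (0:ℝ) < 2^(p-1) := Real.rpow_pos_of_pos two_pos _
      calc A^(p-1) + B^(p-1) ≤ 2*((A+B)/2)^(p-1) := by nlinarith [t1, t2]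
        _ = 2^(2-p) * (A+B)^(p-1) := by rw [e, e2]; ring
        _ ≤ max (p-1) (2^(2-p)) * (A+B)^(p-1) :=
            mul_le_mul_of_nonneg_right (le_max_right _ _) (Real.rpow_nonneg hS'.le _)

/-- Lower Hölder-type bound, `B ≤ A`. -/
lemma S1 {p A B : ℝ} (hp : 1 < p) (hB : 0 ≤ B) (hBA : B ≤ A) (hA : 0 < A) :
    min (p-1) (2^(2-p)) * ((A+B)^(p-2) * (A-B)) ≤ A^(p-1) - B^(p-1) := by
  have hAB : (0:ℝ) ≤ A - B := by linarith
  rcases le_or_gt 2 p with h2 | h2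
  · have hS2A : (A+B)^(p-2) ≤ (2*A)^(p-2) :=
      Real.rpow_le_rpow (by linarith) (by linarith) (by linarith)
    have e2A : ((2:ℝ)*A)^(p-2) = 2^(p-2)*A^(p-2) := Real.mul_rpow (by norm_num) hA.le
    have hBA2 : B^(p-2) ≤ A^(p-2) := Real.rpow_le_rpow hB hBA (by linarith)
    have eA : A^(p-2)*A = A^(p-1) := rpow_pm2_mul hp hA.le
    have eB : B^(p-2)*B = B^(p-1) := rpow_pm2_mul hp hB
    have h21 : (2:ℝ)^(2-p) * (2:ℝ)^(p-2) = 1 := two_rpow_cancel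
    have hm2 : (0:ℝ) ≤ 2^(2-p) := Real.rpow_nonneg (by norm_num) _
    have step1 : min (p-1) (2^(2-p)) * ((A+B)^(p-2)*(A-B))
        ≤ 2^(2-p) * ((2^(p-2)*A^(p-2))*(A-B)) := by
      apply mul_le_mul (min_le_right _ _) _ (by positivity) hm2
      rw [← e2A]
      exact mul_le_mul_of_nonneg_right hS2A hAB
    have step2 : (2:ℝ)^(2-p) * ((2^(p-2)*A^(p-2))*(A-B)) = A^(p-2)*(A-B) := by
      linear_combination A ^ (p-2) * (A - B) * h21
    have step3 : A^(p-2)*(A-B) ≤ A^(p-1) - B^(p-1) := by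
      nlinarith [mul_le_mul_of_nonneg_right hBA2 hB]
    linarith
  · have t := tangent_concave (q := p-1) (by linarith) (by linarith) hA hB
    rw [show p-1-1 = p-2 by ring] at t
    have hS : (A+B)^(p-2) ≤ A^(p-2) :=
      Real.rpow_le_rpow_of_nonpos hA (by linarith) (by linarith)
    have step : min (p-1) (2^(2-p)) * ((A+B)^(p-2)*(A-B)) ≤ (p-1)*(A^(p-2)*(A-B)) := by
      apply mul_le_mul (min_le_left _ _) (mul_le_mul_of_nonneg_right hS hAB)
        (by positivity) (by linarith)
    nlinarith [t]

/-- `p - 1 ≤ 2^(p-2)` for `1 < p < 2`. -/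
lemma pm1_le_two_rpow {p : ℝ} (hp : 1 < p) (h2 : p < 2) : p - 1 ≤ (2:ℝ)^(p-2) := by
  have hexp : (2:ℝ)^(p-2) = Real.exp (Real.log 2 * (p-2)) := Real.rpow_def_of_pos two_pos _
  have h1 := Real.add_one_le_exp (Real.log 2 * (p-2))
  have hlog : Real.log 2 ≤ 1 := by linarith [Real.log_le_sub_one_of_pos (by norm_num : (0:ℝ) < 2)]
  have hlogpos : 0 < Real.log 2 := Real.log_pos (by norm_num)
  nlinarith [hexp, h1]

/-- Upper Hölder-type bound, `B ≤ A`. -/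
lemma S2 {p A B : ℝ} (hp : 1 < p) (hB : 0 ≤ B) (hBA : B ≤ A) (hA : 0 < A) :
    A^(p-1) - B^(p-1) ≤ max (p-1) (2^(2-p)) * ((A+B)^(p-2) * (A-B)) := by
  have hAB : (0:ℝ) ≤ A - B := by linarith
  have h21 : (2:ℝ)^(2-p) * (2:ℝ)^(p-2) = 1 := two_rpow_cancel
  have hm2 : (0:ℝ) ≤ 2^(2-p) := Real.rpow_nonneg (by norm_num) _
  have htau : (0:ℝ) ≤ (A+B)^(p-2) := Real.rpow_nonneg (by linarith) _
  rcases le_or_gt 2 p with h2 | h2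
  · have t := tangent_convex (q := p-1) (by linarith) hA hB
    rw [show p-1-1 = p-2 by ring] at t
    have hS : A^(p-2) ≤ (A+B)^(p-2) :=
      Real.rpow_le_rpow hA.le (by linarith) (by linarith)
    have step : (p-1)*(A^(p-2)*(A-B)) ≤ max (p-1) (2^(2-p)) * ((A+B)^(p-2)*(A-B)) := by
      apply mul_le_mul (le_max_left _ _) (mul_le_mul_of_nonneg_right hS hAB)
        (by positivity) (le_trans (by linarith) (le_max_left _ _))
    nlinarith [t]
  · rcases le_or_gt (3*B) A with h3 | h3
    · have hABpos : 0 < A - B := by linarith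
      have hsub : A^(p-1) ≤ (A-B)^(p-1) + B^(p-1) := by
        have h := real_rpow_subadd (A := A - B) (B := B) hAB hB
          (by linarith : (0:ℝ) ≤ p-1) (by linarith)
        rwa [sub_add_cancel] at h
      have e : (A-B)^(p-2)*(A-B) = (A-B)^(p-1) := rpow_pm2_mul hp hAB
      have hcmp : (A-B)^(p-2) ≤ 2^(2-p)*(A+B)^(p-2) := by
        have h1 : ((2:ℝ)*(A-B))^(p-2) ≤ (A+B)^(p-2) :=
          Real.rpow_le_rpow_of_nonpos (by linarith) (by linarith) (by linarith)
        rw [Real.mul_rpow (by norm_num) hAB] at h1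
        have h2 := mul_le_mul_of_nonneg_left h1 hm2
        calc (A-B)^(p-2) = 2^(2-p) * (2^(p-2)*(A-B)^(p-2)) := by
              linear_combination (A-B)^(p-2) * h21.symm
          _ ≤ 2^(2-p)*(A+B)^(p-2) := h2
      have final : (A-B)^(p-1) ≤ max (p-1) (2^(2-p)) * ((A+B)^(p-2)*(A-B)) := by
        calc (A-B)^(p-1) = (A-B)^(p-2)*(A-B) := e.symm
          _ ≤ (2^(2-p)*(A+B)^(p-2))*(A-B) := mul_le_mul_of_nonneg_right hcmp hAB
          _ ≤ max (p-1) (2^(2-p)) * ((A+B)^(p-2)*(A-B)) := by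
              have := mul_le_mul_of_nonneg_right (le_max_right (p-1) ((2:ℝ)^(2-p)))
                (mul_nonneg htau hAB)
              nlinarith [this]
      nlinarith [Real.rpow_nonneg hB (p-1)]
    · have hB' : 0 < B := by linarith
      have t := tangent_concave (q := p-1) (by linarith) (by linarith) hB' hA.le
      rw [show p-1-1 = p-2 by ring] at t
      -- t : A^(p-1) ≤ B^(p-1) + (p-1) * B^(p-2) * (A - B)
      have key : (p-1)*B^(p-2) ≤ 2^(2-p)*(A+B)^(p-2) := by
        have h4B : ((4:ℝ)*B)^(p-2) ≤ (A+B)^(p-2) :=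
          Real.rpow_le_rpow_of_nonpos (by linarith) (by linarith) (by linarith)
        have e4 : ((4:ℝ)*B)^(p-2) = 2^(p-2)*(2^(p-2)*B^(p-2)) := by
          rw [show (4:ℝ)*B = 2*(2*B) by ring, Real.mul_rpow (by norm_num) (by linarith),
            Real.mul_rpow (by norm_num) hB'.le]
        have h5 := mul_le_mul_of_nonneg_left h4B hm2
        rw [e4] at h5
        have h6 : (2:ℝ)^(2-p) * (2^(p-2)*(2^(p-2)*B^(p-2))) = 2^(p-2)*B^(p-2) := by
          linear_combination (2:ℝ)^(p-2)*B^(p-2) * h21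
        have h7 := pm1_le_two_rpow hp h2
        have hBp : (0:ℝ) ≤ B^(p-2) := Real.rpow_nonneg hB'.le _
        nlinarith [mul_le_mul_of_nonneg_right h7 hBp]
      have step : (p-1)*B^(p-2)*(A-B) ≤ max (p-1) (2^(2-p)) * ((A+B)^(p-2)*(A-B)) := by
        have g1 := mul_le_mul_of_nonneg_right key hAB
        have g2 := mul_le_mul_of_nonneg_right
          (mul_le_mul_of_nonneg_right (le_max_right (p-1) ((2:ℝ)^(2-p))) htau) hAB
        nlinarith [g1, g2]
      nlinarith [t]

/-- An affine function of `t` that is nonneg at both endpoints `±K` is nonneg on `[-K,K]`. -/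
lemma affine_nonneg {c d t K : ℝ} (ht : |t| ≤ K) (h1 : 0 ≤ c + d*K) (h2 : 0 ≤ c - d*K) :
    0 ≤ c + d*t := by
  obtain ⟨h3, h4⟩ := abs_le.mp ht
  rcases le_total 0 d with hd | hd
  · nlinarith
  · nlinarith

/-- Monotonicity bound: `m (A+B)^(p-2) |η|² ≤ Φ·η` in scalar form. -/
lemma K1 {p A B t : ℝ} (hp : 1 < p) (hA : 0 < A) (hB : 0 < B) (ht : |t| ≤ A*B) :
    min (p-1) (2^(2-p)) * (A+B)^(p-2) * (A^2 + 2*t + B^2)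
      ≤ A^(p-2)*A^2 + (A^(p-2)+B^(p-2))*t + B^(p-2)*B^2 := by
  have f1 : A^(p-2)*A = A^(p-1) := rpow_pm2_mul hp hA.le
  have f2 : B^(p-2)*B = B^(p-1) := rpow_pm2_mul hp hB.le
  have f3 : (A+B)^(p-2)*(A+B) = (A+B)^(p-1) := rpow_pm2_mul hp (by linarith)
  have h1 : 0 ≤ (A^(p-2)*A^2 + B^(p-2)*B^2 - min (p-1) (2^(2-p))*(A+B)^(p-2)*(A^2+B^2))
      + (A^(p-2)+B^(p-2) - 2*min (p-1) (2^(2-p))*(A+B)^(p-2))*(A*B) := by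
    have s3 := S3 hp hA.le hB.le
    have h := mul_le_mul_of_nonneg_right s3 (by linarith : (0:ℝ) ≤ A+B)
    have e1 : A^(p-2)*A^2 + B^(p-2)*B^2 + (A^(p-2)+B^(p-2))*(A*B)
        = (A^(p-1)+B^(p-1))*(A+B) := by linear_combination (A+B)*f1 + (A+B)*f2
    have e2 : min (p-1) (2^(2-p))*(A+B)^(p-2)*(A^2+B^2) + 2*min (p-1) (2^(2-p))*(A+B)^(p-2)*(A*B)
        = min (p-1) (2^(2-p))*(A+B)^(p-1)*(A+B) := by linear_combination min (p-1) ((2:ℝ)^(2-p))*(A+B)*f3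
    linarith [h, e1, e2]
  have h2 : 0 ≤ (A^(p-2)*A^2 + B^(p-2)*B^2 - min (p-1) (2^(2-p))*(A+B)^(p-2)*(A^2+B^2))
      - (A^(p-2)+B^(p-2) - 2*min (p-1) (2^(2-p))*(A+B)^(p-2))*(A*B) := by
    have e2 : min (p-1) (2^(2-p))*(A+B)^(p-2)*(A^2+B^2) - 2*min (p-1) (2^(2-p))*(A+B)^(p-2)*(A*B)
        = min (p-1) (2^(2-p))*((A+B)^(p-2)*(A-B))*(A-B) := by ring
    rcases le_total B A with hle | hle
    · have s1 := S1 hp hB.le hle hA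
      have h := mul_le_mul_of_nonneg_right s1 (by linarith : (0:ℝ) ≤ A-B)
      have e1 : A^(p-2)*A^2 + B^(p-2)*B^2 - (A^(p-2)+B^(p-2))*(A*B)
          = (A^(p-1)-B^(p-1))*(A-B) := by linear_combination (A-B)*f1 + (B-A)*f2
      linarith [h, e1, e2]
    · have s1 := S1 hp hA.le hle hB
      rw [show B + A = A + B from add_comm B A] at s1
      have h := mul_le_mul_of_nonneg_right s1 (by linarith : (0:ℝ) ≤ B-A)
      have e1 : A^(p-2)*A^2 + B^(p-2)*B^2 - (A^(p-2)+B^(p-2))*(A*B)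
          = (B^(p-1)-A^(p-1))*(B-A) := by linear_combination (B-A)*f2 + (A-B)*f1
      have e2' : min (p-1) (2^(2-p))*(A+B)^(p-2)*(A^2+B^2) - 2*min (p-1) (2^(2-p))*(A+B)^(p-2)*(A*B)
          = min (p-1) (2^(2-p))*((A+B)^(p-2)*(B-A))*(B-A) := by ring
      linarith [h, e1, e2']
  have haff := affine_nonneg ht h1 h2
  nlinarith [haff]

/-- Continuity bound: `‖Φ‖² ≤ M² ((A+B)^(p-2))² |η|²` in scalar form. -/
lemma K2 {p A B t : ℝ} (hp : 1 < p) (hA : 0 < A) (hB : 0 < B) (ht : |t| ≤ A*B) :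
    (A^(p-2))^2*A^2 + 2*(A^(p-2)*B^(p-2))*t + (B^(p-2))^2*B^2
      ≤ (max (p-1) (2^(2-p)))^2 * ((A+B)^(p-2))^2 * (A^2 + 2*t + B^2) := by
  have f1 : A^(p-2)*A = A^(p-1) := rpow_pm2_mul hp hA.le
  have f2 : B^(p-2)*B = B^(p-1) := rpow_pm2_mul hp hB.le
  have f3 : (A+B)^(p-2)*(A+B) = (A+B)^(p-1) := rpow_pm2_mul hp (by linarith)
  have hA1 : 0 ≤ A^(p-1) := Real.rpow_nonneg hA.le _
  have hB1 : 0 ≤ B^(p-1) := Real.rpow_nonneg hB.le _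
  have g1 : (A^(p-2))^2*A^2 = (A^(p-1))^2 := by rw [← f1]; ring
  have g2 : (B^(p-2))^2*B^2 = (B^(p-1))^2 := by rw [← f2]; ring
  have g12 : (A^(p-2)*B^(p-2))*(A*B) = A^(p-1)*B^(p-1) := by rw [← f1, ← f2]; ring
  have g3 : (max (p-1) (2^(2-p)))^2*(((A+B)^(p-2))^2*(A+B)^2)
      = (max (p-1) (2^(2-p)))^2*((A+B)^(p-1))^2 := by rw [← f3]; ring
  have h1 : 0 ≤ ((max (p-1) (2^(2-p)))^2*((A+B)^(p-2))^2*(A^2+B^2)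
        - (A^(p-2))^2*A^2 - (B^(p-2))^2*B^2)
      + (2*(max (p-1) (2^(2-p)))^2*((A+B)^(p-2))^2 - 2*(A^(p-2)*B^(p-2)))*(A*B) := by
    have s4 := S4 hp hA.le hB.le
    have hsq := pow_le_pow_left₀ (by linarith : (0:ℝ) ≤ A^(p-1) + B^(p-1)) s4 2
    linarith [hsq, g1, g2, g12, g3]
  have h2 : 0 ≤ ((max (p-1) (2^(2-p)))^2*((A+B)^(p-2))^2*(A^2+B^2)
        - (A^(p-2))^2*A^2 - (B^(p-2))^2*B^2)
      - (2*(max (p-1) (2^(2-p)))^2*((A+B)^(p-2))^2 - 2*(A^(p-2)*B^(p-2)))*(A*B) := by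
    rcases le_total B A with hle | hle
    · have s2 := S2 hp hB.le hle hA
      have hmono : B^(p-1) ≤ A^(p-1) := Real.rpow_le_rpow hB.le hle (by linarith)
      have hsq := pow_le_pow_left₀ (by linarith : (0:ℝ) ≤ A^(p-1) - B^(p-1)) s2 2
      linarith [hsq, g1, g2, g12]
    · have s2 := S2 hp hA.le hle hB
      rw [show B + A = A + B from add_comm B A] at s2
      have hmono : A^(p-1) ≤ B^(p-1) := Real.rpow_le_rpow hA.le hle (by linarith)
      have hsq := pow_le_pow_left₀ (by linarith : (0:ℝ) ≤ B^(p-1) - A^(p-1)) s2 2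
      linarith [hsq, g1, g2, g12]
  have haff := affine_nonneg ht h1 h2
  nlinarith [haff]

/-- The translated p-Laplacian nonlinearity
`Φ_p(η,ξ) = |η−ξ|^{p−2}(η−ξ) + |ξ|^{p−2}ξ`
(with the convention `|x|^{p−2}x = 0` when `x = 0`). -/
noncomputable def Phi (p : ℝ) {N : ℕ} (η ξ : EuclideanSpace ℝ (Fin N)) :
    EuclideanSpace ℝ (Fin N) :=
  (‖η - ξ‖ ^ (p - 2)) • (η - ξ) + (‖ξ‖ ^ (p - 2)) • ξ

/-- The combined bound used in the energy estimate (3.12):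
`|Φ_p(η,ξ)|² ≤ C_p (|η−ξ| + |ξ|)^{p−2} (Φ_p(η,ξ)·η)` with
`C_p = (max{p−1, 2^{2−p}})² / min{p−1, 2^{2−p}}`. -/
theorem phi_norm_sq_le_inner (p : ℝ) (hp : 1 < p) (N : ℕ) (hN : 1 ≤ N)
    (η ξ : EuclideanSpace ℝ (Fin N)) (h : 0 < ‖η - ξ‖ + ‖ξ‖) :
    ‖Phi p η ξ‖ ^ 2
      ≤ (max (p - 1) (2 ^ (2 - p)) ^ 2 / min (p - 1) (2 ^ (2 - p)))
        * (‖η - ξ‖ + ‖ξ‖) ^ (p - 2) * (inner ℝ (Phi p η ξ) η : ℝ) := by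
  have hα : (0:ℝ) ≤ ‖η - ξ‖ ^ (p-2) := Real.rpow_nonneg (norm_nonneg _) _
  have hβ : (0:ℝ) ≤ ‖ξ‖ ^ (p-2) := Real.rpow_nonneg (norm_nonneg _) _
  have hab : η - ξ + ξ = η := sub_add_cancel η ξ
  have hX : ‖Phi p η ξ‖ ^ 2
      = (‖η-ξ‖^(p-2))^2*‖η-ξ‖^2 + 2*(‖η-ξ‖^(p-2)*‖ξ‖^(p-2))*(inner ℝ (η-ξ) ξ : ℝ)
        + (‖ξ‖^(p-2))^2*‖ξ‖^2 := by
    simp only [Phi]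
    rw [norm_add_sq_real, norm_smul, norm_smul, real_inner_smul_left, real_inner_smul_right,
      Real.norm_eq_abs, Real.norm_eq_abs, abs_of_nonneg hα, abs_of_nonneg hβ]
    ring
  have hI : (inner ℝ (Phi p η ξ) η : ℝ)
      = ‖η-ξ‖^(p-2)*‖η-ξ‖^2 + (‖η-ξ‖^(p-2)+‖ξ‖^(p-2))*(inner ℝ (η-ξ) ξ : ℝ)
        + ‖ξ‖^(p-2)*‖ξ‖^2 := by
    have hsplit : (inner ℝ (Phi p η ξ) η : ℝ)
        = (inner ℝ (Phi p η ξ) (η - ξ) : ℝ) + (inner ℝ (Phi p η ξ) ξ : ℝ) := by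
      rw [← inner_add_right, hab]
    rw [hsplit]
    simp only [Phi, inner_add_left, real_inner_smul_left, real_inner_self_eq_norm_sq]
    rw [real_inner_comm ξ (η-ξ)]
    ring
  have ht : |(inner ℝ (η-ξ) ξ : ℝ)| ≤ ‖η-ξ‖*‖ξ‖ := abs_real_inner_le_norm _ _
  have hm : (0:ℝ) < min (p-1) (2^(2-p)) :=
    lt_min (by linarith) (Real.rpow_pos_of_pos two_pos _)
  have hM1 : (1:ℝ) ≤ max (p-1) (2^(2-p)) := by
    rcases le_or_gt 2 p with h' | h'
    · exact le_trans (by linarith) (le_max_left _ _)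
    · refine le_trans ?_ (le_max_right _ _)
      rw [show (1:ℝ) = (2:ℝ)^(0:ℝ) by rw [Real.rpow_zero]]
      exact Real.rpow_le_rpow_of_exponent_le one_le_two (by linarith)
  have hC : (1:ℝ) ≤ max (p-1) (2^(2-p)) ^ 2 / min (p-1) (2^(2-p)) := by
    rw [le_div_iff₀ hm]
    nlinarith [min_le_max (a := p-1) (b := (2:ℝ)^(2-p))]
  rw [hX, hI]
  by_cases hA0 : ‖η - ξ‖ = 0
  · have he : η - ξ = 0 := norm_eq_zero.mp hA0
    have ht0 : (inner ℝ (η-ξ) ξ : ℝ) = 0 := by rw [he, inner_zero_left]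
    have hB : 0 < ‖ξ‖ := by rw [hA0] at h; linarith
    rw [hA0, ht0, zero_add]
    have hterm : (0:ℝ) ≤ (‖ξ‖^(p-2))^2*‖ξ‖^2 := by positivity
    nlinarith [mul_le_mul_of_nonneg_right hC hterm]
  · by_cases hB0 : ‖ξ‖ = 0
    · have ht0 : (inner ℝ (η-ξ) ξ : ℝ) = 0 := by
        rw [norm_eq_zero.mp hB0, inner_zero_right]
      rw [hB0, ht0, add_zero]
      have hterm : (0:ℝ) ≤ (‖η-ξ‖^(p-2))^2*‖η-ξ‖^2 := by positivity
      nlinarith [mul_le_mul_of_nonneg_right hC hterm]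
    · have hA : 0 < ‖η - ξ‖ := lt_of_le_of_ne (norm_nonneg _) (Ne.symm hA0)
      have hB : 0 < ‖ξ‖ := lt_of_le_of_ne (norm_nonneg _) (Ne.symm hB0)
      have k1 := K1 hp hA hB ht
      have k2 := K2 hp hA hB ht
      have hm0 : min (p-1) ((2:ℝ)^(2-p)) ≠ 0 := ne_of_gt hm
      have hτ : (0:ℝ) < (‖η-ξ‖+‖ξ‖)^(p-2) := Real.rpow_pos_of_pos h _
      calc (‖η-ξ‖^(p-2))^2*‖η-ξ‖^2 + 2*(‖η-ξ‖^(p-2)*‖ξ‖^(p-2))*(inner ℝ (η-ξ) ξ : ℝ)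
            + (‖ξ‖^(p-2))^2*‖ξ‖^2
          ≤ (max (p-1) (2^(2-p)))^2 * ((‖η-ξ‖+‖ξ‖)^(p-2))^2
            * (‖η-ξ‖^2 + 2*(inner ℝ (η-ξ) ξ : ℝ) + ‖ξ‖^2) := k2
        _ = max (p-1) (2^(2-p)) ^ 2 / min (p-1) (2^(2-p)) * (‖η-ξ‖+‖ξ‖)^(p-2)
            * (min (p-1) (2^(2-p)) * (‖η-ξ‖+‖ξ‖)^(p-2)
              * (‖η-ξ‖^2 + 2*(inner ℝ (η-ξ) ξ : ℝ) + ‖ξ‖^2)) := by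
            field_simp
        _ ≤ max (p-1) (2^(2-p)) ^ 2 / min (p-1) (2^(2-p)) * (‖η-ξ‖+‖ξ‖)^(p-2)
            * (‖η-ξ‖^(p-2)*‖η-ξ‖^2 + (‖η-ξ‖^(p-2)+‖ξ‖^(p-2))*(inner ℝ (η-ξ) ξ : ℝ)
              + ‖ξ‖^(p-2)*‖ξ‖^2) := by
            apply mul_le_mul_of_nonneg_left k1
            have : (0:ℝ) ≤ max (p-1) (2^(2-p)) ^ 2 / min (p-1) (2^(2-p)) := by positivity
            positivity
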